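/- Let (u₁, v₁) solve the planar Lotka–Volterra competition ODE system u' = u(a₁ − b₁u − c₁v), v' = v(a₂ − b₂u − c₂v) with positive parameters satisfying a₁/a₂ < min{b₁/b₂, c₁/c₂} and positive initial data. Then (u₁(t), v₁(t)) → (0, a₂/c₂) as t → ∞. -/

import Mathlib

open Real Set Filter Topology

/-- Linear upper bound from a derivative bound. -/
private lemma LV_lin_le {x d : ℝ → ℝ} {a c : ℝ}
    (hx : ∀ t, a ≤ t → HasDerivAt x (d t) t)
    (hd : ∀ t, a ≤ t → d t ≤ c) :
    ∀ t, a ≤ t → x t ≤ x a + c * (t - a) := by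
  intro t ht
  have H := image_le_of_deriv_right_le_deriv_boundary
    (f := x) (f' := d) (a := a) (b := t)
    (B := fun s => x a + c * (s - a)) (B' := fun _ => c)
    (fun s hs => (hx s hs.1).continuousAt.continuousWithinAt)
    (fun s hs => (hx s hs.1).hasDerivWithinAt)
    (by simp)
    (by fun_prop)
    (fun s _ => by
      have : HasDerivAt (fun s => x a + c * (s - a)) (c * 1) s :=
        (((hasDerivAt_id s).sub_const a).const_mul c).const_add (x a)
      simpa using this.hasDerivWithinAt)
    (fun s hs => hd s hs.1)
  exact H (right_mem_Icc.2 ht)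

/-- Barrier lemma: stay below `K`. -/
private lemma LV_stay_below {x d : ℝ → ℝ} {a K : ℝ}
    (hx : ∀ t, a ≤ t → HasDerivAt x (d t) t)
    (h0 : x a ≤ K) (hK : ∀ t, a ≤ t → x t = K → d t < 0) :
    ∀ t, a ≤ t → x t ≤ K := by
  intro t ht
  have H := image_le_of_deriv_right_lt_deriv_boundary
    (f := x) (f' := d) (a := a) (b := t)
    (B := fun _ => K) (B' := fun _ => 0)
    (fun s hs => (hx s hs.1).continuousAt.continuousWithinAt)
    (fun s hs => (hx s hs.1).hasDerivWithinAt)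
    h0
    (fun s => hasDerivAt_const s K)
    (fun s hs hsK => hK s hs.1 hsK)
  exact H (right_mem_Icc.2 ht)

/-- If the derivative is ≤ -δ whenever `x ≥ K`, and `x` is bounded below, then
eventually `x ≤ K`. -/
private lemma LV_eventually_below {x d : ℝ → ℝ} {a K m δ : ℝ} (hδ : 0 < δ)
    (hx : ∀ t, a ≤ t → HasDerivAt x (d t) t)
    (hm : ∀ t, a ≤ t → m ≤ x t)
    (hbound : ∀ t, a ≤ t → K ≤ x t → d t ≤ -δ) :
    ∃ T, a ≤ T ∧ ∀ t, T ≤ t → x t ≤ K := by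
  by_cases hK : ∃ t₀, a ≤ t₀ ∧ x t₀ ≤ K
  · obtain ⟨t₀, ht₀, hxt₀⟩ := hK
    refine ⟨t₀, ht₀, ?_⟩
    exact LV_stay_below (fun t ht => hx t (ht₀.trans ht)) hxt₀
      (fun t ht hte => by
        have := hbound t (ht₀.trans ht) hte.ge
        linarith)
  · push_neg at hK
    exfalso
    have hd : ∀ t, a ≤ t → d t ≤ -δ := fun t ht =>
      hbound t ht (hK t ht).le
    set t₁ := a + (x a - m) / δ + 1 with ht₁def
    have hma : m ≤ x a := hm a le_rfl
    have ht₁ : a ≤ t₁ := by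
      have h0 : 0 ≤ (x a - m) / δ := div_nonneg (by linarith) hδ.le
      rw [ht₁def]; linarith
    have h1 := LV_lin_le hx hd t₁ ht₁
    have h2 := hm t₁ ht₁
    have : (-δ) * (t₁ - a) = -(x a - m) - δ := by
      have hq : δ * ((x a - m) / δ) = x a - m := by
        rw [mul_div_assoc']; exact mul_div_cancel_left₀ _ hδ.ne'
      rw [ht₁def]
      linear_combination (-1) * hq
    linarith

/-- Mirror: if the derivative is ≥ δ whenever `x ≤ K`, and `x` is bounded above, then
eventually `x ≥ K`. -/
private lemma LV_eventually_above {x d : ℝ → ℝ} {a K M δ : ℝ} (hδ : 0 < δ)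
    (hx : ∀ t, a ≤ t → HasDerivAt x (d t) t)
    (hM : ∀ t, a ≤ t → x t ≤ M)
    (hbound : ∀ t, a ≤ t → x t ≤ K → δ ≤ d t) :
    ∃ T, a ≤ T ∧ ∀ t, T ≤ t → K ≤ x t := by
  obtain ⟨T, hT, h⟩ := LV_eventually_below (x := fun t => -x t) (d := fun t => -d t)
    (K := -K) (m := -M) hδ (fun t ht => (hx t ht).neg)
    (fun t ht => neg_le_neg (hM t ht))
    (fun t ht hKx => by
      have hxK : x t ≤ K := by simpa using hKx
      have := hbound t ht hxK
      show -d t ≤ -δ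
      linarith)
  exact ⟨T, hT, fun t ht => by
    have := h t ht
    linarith⟩

/-- Positivity of solutions of `x' = x * r` with continuous `r`. -/
private lemma LV_pos {x r : ℝ → ℝ}
    (hx : ∀ t, 0 ≤ t → HasDerivAt x (x t * r t) t)
    (hr : ∀ t, 0 ≤ t → ContinuousAt r t) (hx0 : 0 < x 0) :
    ∀ t, 0 ≤ t → 0 < x t := by
  set f : ℝ → ℝ := fun t => r (max t 0) with hfdef
  have hf : Continuous f := by
    rw [continuous_iff_continuousAt]
    intro t
    have hg : Continuous fun t : ℝ => max t 0 := continuous_id.max continuous_const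
    have hc : ContinuousAt (r ∘ fun t : ℝ => max t 0) t :=
      ContinuousAt.comp (hr _ (le_max_right _ _)) hg.continuousAt
    exact hc
  set F : ℝ → ℝ := fun t => ∫ s in (0:ℝ)..t, f s with hFdef
  have hF : ∀ t, HasDerivAt F (f t) t := fun t =>
    intervalIntegral.integral_hasDerivAt_right (hf.intervalIntegrable _ _)
      (hf.stronglyMeasurable.stronglyMeasurableAtFilter) hf.continuousAt
  have key : ∀ s, 0 ≤ s → x s * Real.exp (-F s) = x 0 := by
    intro s hs
    have hcon := constant_of_has_deriv_right_zero
      (f := fun τ => x τ * Real.exp (-F τ)) (a := 0) (b := s)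
      (fun τ hτ => ((hx τ hτ.1).continuousAt.mul
        (Real.continuous_exp.continuousAt.comp ((hF τ).continuousAt.neg))).continuousWithinAt)
      (fun τ hτ => by
        have h1 : HasDerivAt (fun τ => x τ * Real.exp (-F τ))
            (x τ * r τ * Real.exp (-F τ) + x τ * (Real.exp (-F τ) * -(f τ))) τ :=
          (hx τ hτ.1).mul ((hF τ).neg.exp)
        have hfτ : f τ = r τ := by rw [hfdef]; simp [max_eq_left hτ.1]
        have : (x τ * r τ * Real.exp (-F τ) + x τ * (Real.exp (-F τ) * -(f τ))) = 0 := by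
          rw [hfτ]; ring
        rw [this] at h1
        exact h1.hasDerivWithinAt)
      s (right_mem_Icc.2 hs)
    have hcon' : x s * Real.exp (-F s) = x 0 * Real.exp (-F 0) := hcon
    rw [show F 0 = 0 from intervalIntegral.integral_same, neg_zero, Real.exp_zero,
      mul_one] at hcon'
    exact hcon'
  intro t ht
  have h := key t ht
  have hx' : x t = x 0 * Real.exp (F t) := by
    rw [← h, Real.exp_neg]
    field_simp
  rw [hx']
  positivity

set_option maxHeartbeats 2000000 in
theorem lotka_volterra_inferior_competitor
    (a₁ a₂ b₁ b₂ c₁ c₂ : ℝ)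
    (ha₁ : 0 < a₁) (ha₂ : 0 < a₂) (hb₁ : 0 < b₁) (hb₂ : 0 < b₂)
    (hc₁ : 0 < c₁) (hc₂ : 0 < c₂)
    (hinf : a₁ / a₂ < min (b₁ / b₂) (c₁ / c₂))
    (u v : ℝ → ℝ)
    (hu : ∀ t, 0 ≤ t → HasDerivAt u (u t * (a₁ - b₁ * u t - c₁ * v t)) t)
    (hv : ∀ t, 0 ≤ t → HasDerivAt v (v t * (a₂ - b₂ * u t - c₂ * v t)) t)
    (hu0 : 0 < u 0) (hv0 : 0 < v 0) :
    Tendsto u atTop (nhds 0) ∧ Tendsto v atTop (nhds (a₂ / c₂)) := by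
  have hab : a₁ * b₂ < b₁ * a₂ := by
    have h := lt_of_lt_of_le hinf (min_le_left _ _)
    rwa [div_lt_div_iff₀ ha₂ hb₂] at h
  have hac : a₁ * c₂ < c₁ * a₂ := by
    have h := lt_of_lt_of_le hinf (min_le_right _ _)
    rwa [div_lt_div_iff₀ ha₂ hc₂] at h
  set σ : ℝ := a₁ / a₂ with hσdef
  have hσ : 0 < σ := div_pos ha₁ ha₂
  have hα : 0 < b₁ - σ * b₂ := by
    rw [hσdef, sub_pos, div_mul_eq_mul_div, div_lt_iff₀ ha₂]; linarith
  have hβ : 0 < c₁ - σ * c₂ := by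
    rw [hσdef, sub_pos, div_mul_eq_mul_div, div_lt_iff₀ ha₂]; linarith
  -- positivity
  have hupos : ∀ t, 0 ≤ t → 0 < u t := by
    refine LV_pos (r := fun t => a₁ - b₁ * u t - c₁ * v t) hu (fun t ht => ?_) hu0
    exact (continuousAt_const.sub (continuousAt_const.mul (hu t ht).continuousAt)).sub
      (continuousAt_const.mul (hv t ht).continuousAt)
  have hvpos : ∀ t, 0 ≤ t → 0 < v t := by
    refine LV_pos (r := fun t => a₂ - b₂ * u t - c₂ * v t) hv (fun t ht => ?_) hv0
    exact (continuousAt_const.sub (continuousAt_const.mul (hu t ht).continuousAt)).sub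
      (continuousAt_const.mul (hv t ht).continuousAt)
  -- upper bounds
  set Mu : ℝ := max (u 0) (a₁ / b₁) with hMudef
  set Mv : ℝ := max (v 0) (a₂ / c₂) with hMvdef
  have hMu : ∀ t, 0 ≤ t → u t ≤ Mu := by
    intro t ht
    by_contra hcon
    push_neg at hcon
    set ε : ℝ := (u t - Mu) / 2 with hεdef
    have hε : 0 < ε := by rw [hεdef]; linarith
    have := LV_stay_below (x := u) (d := fun t => u t * (a₁ - b₁ * u t - c₁ * v t))
      (a := 0) (K := Mu + ε) hu (by rw [hMudef]; have := le_max_left (u 0) (a₁ / b₁); linarith)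
      (fun s hs hse => by
        have h1 : 0 < u s := hupos s hs
        have h2 : 0 < v s := hvpos s hs
        have h3 : a₁ / b₁ ≤ Mu := le_max_right _ _
        have h4 : b₁ * (a₁ / b₁) = a₁ := by field_simp
        have h5 : a₁ - b₁ * u s - c₁ * v s < 0 := by
          rw [hse]; nlinarith
        exact mul_neg_of_pos_of_neg h1 h5) t ht
    rw [hεdef] at this
    linarith
  have hMv : ∀ t, 0 ≤ t → v t ≤ Mv := by
    intro t ht
    by_contra hcon
    push_neg at hcon
    set ε : ℝ := (v t - Mv) / 2 with hεdef
    have hε : 0 < ε := by rw [hεdef]; linarith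
    have := LV_stay_below (x := v) (d := fun t => v t * (a₂ - b₂ * u t - c₂ * v t))
      (a := 0) (K := Mv + ε) hv (by rw [hMvdef]; have := le_max_left (v 0) (a₂ / c₂); linarith)
      (fun s hs hse => by
        have h1 : 0 < u s := hupos s hs
        have h2 : 0 < v s := hvpos s hs
        have h3 : a₂ / c₂ ≤ Mv := le_max_right _ _
        have h4 : c₂ * (a₂ / c₂) = a₂ := by field_simp
        have h5 : a₂ - b₂ * u s - c₂ * v s < 0 := by
          rw [hse]; nlinarith
        exact mul_neg_of_pos_of_neg h2 h5) t ht
    rw [hεdef] at this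
    linarith
  have hMvpos : 0 < Mv := lt_of_lt_of_le (div_pos ha₂ hc₂) (le_max_right _ _)
  -- Step A : eventually u ≤ a₁/b₁ + ε
  have hstepA : ∀ ε : ℝ, 0 < ε → ∃ T, 0 ≤ T ∧ ∀ t, T ≤ t → u t ≤ a₁ / b₁ + ε := by
    intro ε hε
    refine LV_eventually_below (x := u) (d := fun t => u t * (a₁ - b₁ * u t - c₁ * v t))
      (a := 0) (K := a₁ / b₁ + ε) (m := 0) (δ := (a₁ / b₁ + ε) * (b₁ * ε))
      (by positivity) hu (fun t ht => (hupos t ht).le) ?_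
    intro t ht hKt
    have h1 : 0 < u t := hupos t ht
    have h2 : 0 < v t := hvpos t ht
    have h4 : b₁ * (a₁ / b₁) = a₁ := by field_simp
    have h5 : a₁ - b₁ * u t - c₁ * v t ≤ -(b₁ * ε) := by nlinarith
    have h6 : u t * (a₁ - b₁ * u t - c₁ * v t) ≤ (a₁ / b₁ + ε) * (a₁ - b₁ * u t - c₁ * v t) := by
      apply mul_le_mul_of_nonpos_right hKt
      nlinarith
    calc u t * (a₁ - b₁ * u t - c₁ * v t)
        ≤ (a₁ / b₁ + ε) * (a₁ - b₁ * u t - c₁ * v t) := h6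
      _ ≤ -((a₁ / b₁ + ε) * (b₁ * ε)) := by nlinarith [div_pos ha₁ hb₁]
  -- constants for step B/C
  set A0 : ℝ := a₂ - b₂ * (a₁ / b₁) with hA0def
  have hA0 : 0 < A0 := by
    rw [hA0def, sub_pos, mul_div_assoc', div_lt_iff₀ hb₁]; linarith
  obtain ⟨T₁, hT₁0, hT₁⟩ := hstepA (A0 / (2 * b₂)) (by positivity)
  set K₂ : ℝ := A0 / (4 * c₂) with hK₂def
  have hK₂pos : 0 < K₂ := by positivity
  -- log derivative of v
  have hlogv : ∀ t, 0 ≤ t → HasDerivAt (fun s => Real.log (v s)) (a₂ - b₂ * u t - c₂ * v t) t := by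
    intro t ht
    have h := (hv t ht).log (hvpos t ht).ne'
    rwa [mul_div_cancel_left₀ _ (hvpos t ht).ne'] at h
  have hlogu : ∀ t, 0 ≤ t → HasDerivAt (fun s => Real.log (u s)) (a₁ - b₁ * u t - c₁ * v t) t := by
    intro t ht
    have h := (hu t ht).log (hupos t ht).ne'
    rwa [mul_div_cancel_left₀ _ (hupos t ht).ne'] at h
  -- Step C : eventually v ≥ K₂
  have hstepC : ∃ T₂, T₁ ≤ T₂ ∧ ∀ t, T₂ ≤ t → K₂ ≤ v t := by
    obtain ⟨T₂, hT₂a, hT₂⟩ := LV_eventually_above (x := fun s => Real.log (v s))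
      (d := fun t => a₂ - b₂ * u t - c₂ * v t) (a := T₁) (K := Real.log K₂)
      (M := Real.log Mv) (δ := A0 / 4) (by positivity)
      (fun t ht => hlogv t (hT₁0.trans ht))
      (fun t ht => Real.log_le_log (hvpos t (hT₁0.trans ht)) (hMv t (hT₁0.trans ht)))
      (fun t ht hlog => by
        have ht0 : (0:ℝ) ≤ t := hT₁0.trans ht
        have hvt : 0 < v t := hvpos t ht0
        have hvK : v t ≤ K₂ := (Real.log_le_log_iff hvt hK₂pos).mp hlog
        have hut : u t ≤ a₁ / b₁ + A0 / (2 * b₂) := hT₁ t ht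
        have hupt : 0 < u t := hupos t ht0
        have e1 : b₂ * (A0 / (2 * b₂)) = A0 / 2 := by field_simp
        have e2 : c₂ * K₂ = A0 / 4 := by rw [hK₂def]; field_simp
        have e3 : a₂ - b₂ * (a₁ / b₁) = A0 := by rw [hA0def]
        nlinarith)
    refine ⟨T₂, hT₂a, fun t ht => ?_⟩
    have hvt : 0 < v t := hvpos t (hT₁0.trans (hT₂a.trans ht))
    exact (Real.log_le_log_iff hK₂pos hvt).mp (hT₂ t ht)
  obtain ⟨T₂, hT₂a, hK₂v⟩ := hstepC
  have hT₂0 : (0:ℝ) ≤ T₂ := hT₁0.trans hT₂a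
  -- Lyapunov function w = log u - σ log v
  set w : ℝ → ℝ := fun t => Real.log (u t) - σ * Real.log (v t) with hwdef
  have hw : ∀ t, 0 ≤ t →
      HasDerivAt w (-((b₁ - σ * b₂) * u t + (c₁ - σ * c₂) * v t)) t := by
    intro t ht
    have h := (hlogu t ht).sub ((hlogv t ht).const_mul σ)
    refine HasDerivAt.congr_deriv h ?_
    rw [hσdef]
    field_simp
    ring
  set δ₃ : ℝ := (c₁ - σ * c₂) * K₂ with hδ₃def
  have hδ₃ : 0 < δ₃ := mul_pos hβ hK₂pos
  have hwlin : ∀ t, T₂ ≤ t → w t ≤ w T₂ + (-δ₃) * (t - T₂) := by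
    refine LV_lin_le (fun t ht => hw t (hT₂0.trans ht)) (fun t ht => ?_)
    have ht0 : (0:ℝ) ≤ t := hT₂0.trans ht
    have h1 : 0 < u t := hupos t ht0
    have h2 : K₂ ≤ v t := hK₂v t ht
    have h3 : (c₁ - σ * c₂) * K₂ ≤ (c₁ - σ * c₂) * v t :=
      mul_le_mul_of_nonneg_left h2 hβ.le
    have h4 : 0 ≤ (b₁ - σ * b₂) * u t := mul_nonneg hα.le h1.le
    rw [hδ₃def]
    linarith
  have hwbot : Tendsto w atTop atBot := by
    have h1 : Tendsto (fun t : ℝ => t - T₂) atTop atTop := by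
      simpa [sub_eq_add_neg] using tendsto_atTop_add_const_right atTop (-T₂) tendsto_id
    have h2 : Tendsto (fun t : ℝ => -δ₃ * (t - T₂)) atTop atBot :=
      h1.const_mul_atTop_of_neg (by linarith)
    have h3 : Tendsto (fun t : ℝ => w T₂ + -δ₃ * (t - T₂)) atTop atBot :=
      tendsto_atBot_add_const_left atTop (w T₂) h2
    refine tendsto_atBot_mono' atTop ?_ h3
    filter_upwards [eventually_ge_atTop T₂] with t ht
    exact hwlin t ht
  -- u tends to 0
  have hutendsto : Tendsto u atTop (nhds 0) := by
    set C : ℝ := Real.exp (σ * Real.log Mv) with hCdef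
    have hCpos : 0 < C := Real.exp_pos _
    have hub : ∀ t, 0 ≤ t → u t ≤ Real.exp (w t) * C := by
      intro t ht
      have h1 : u t = Real.exp (Real.log (u t)) := (Real.exp_log (hupos t ht)).symm
      have h2 : Real.log (u t) = w t + σ * Real.log (v t) := by rw [hwdef]; ring
      have h3 : σ * Real.log (v t) ≤ σ * Real.log Mv :=
        mul_le_mul_of_nonneg_left (Real.log_le_log (hvpos t ht) (hMv t ht)) hσ.le
      calc u t = Real.exp (w t + σ * Real.log (v t)) := by rw [h1, h2]
        _ = Real.exp (w t) * Real.exp (σ * Real.log (v t)) := Real.exp_add _ _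
        _ ≤ Real.exp (w t) * C := by
            rw [hCdef]
            exact mul_le_mul_of_nonneg_left (Real.exp_le_exp.mpr h3) (Real.exp_pos _).le
    have hC0 : Tendsto (fun t => Real.exp (w t) * C) atTop (nhds 0) := by
      have := (Real.tendsto_exp_atBot.comp hwbot).mul_const C
      simpa using this
    refine tendsto_of_tendsto_of_tendsto_of_le_of_le' tendsto_const_nhds hC0 ?_ ?_
    · filter_upwards [eventually_ge_atTop (0:ℝ)] with t ht
      exact (hupos t ht).le
    · filter_upwards [eventually_ge_atTop (0:ℝ)] with t ht
      exact hub t ht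
  refine ⟨hutendsto, ?_⟩
  -- upper bound for v : eventually v ≤ a₂/c₂ + ε
  have hvupper : ∀ ε : ℝ, 0 < ε → ∃ T, ∀ t, T ≤ t → v t ≤ a₂ / c₂ + ε := by
    intro ε hε
    obtain ⟨T, hTa, hT⟩ := LV_eventually_below (x := v)
      (d := fun t => v t * (a₂ - b₂ * u t - c₂ * v t)) (a := 0)
      (K := a₂ / c₂ + ε) (m := 0) (δ := (a₂ / c₂ + ε) * (c₂ * ε)) (by positivity)
      hv (fun t ht => (hvpos t ht).le)
      (fun t ht hKt => by
        have h1 : 0 < u t := hupos t ht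
        have h2 : 0 < v t := hvpos t ht
        have h4 : c₂ * (a₂ / c₂) = a₂ := by field_simp
        have h5 : a₂ - b₂ * u t - c₂ * v t ≤ -(c₂ * ε) := by nlinarith
        have h6 : v t * (a₂ - b₂ * u t - c₂ * v t) ≤
            (a₂ / c₂ + ε) * (a₂ - b₂ * u t - c₂ * v t) := by
          apply mul_le_mul_of_nonpos_right hKt
          nlinarith
        calc v t * (a₂ - b₂ * u t - c₂ * v t)
            ≤ (a₂ / c₂ + ε) * (a₂ - b₂ * u t - c₂ * v t) := h6
          _ ≤ -((a₂ / c₂ + ε) * (c₂ * ε)) := by nlinarith [div_pos ha₂ hc₂])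
    exact ⟨T, hT⟩
  -- lower bound for v : eventually v ≥ a₂/c₂ - ε
  have hvlower : ∀ ε : ℝ, 0 < ε → ∃ T, ∀ t, T ≤ t → a₂ / c₂ - ε ≤ v t := by
    intro ε hε
    have hsmall : ∀ᶠ t in atTop, u t < c₂ * ε / (2 * b₂) :=
      hutendsto.eventually_lt_const (by positivity)
    obtain ⟨Tu, hTu⟩ := (eventually_atTop).mp hsmall
    set T₃ : ℝ := max T₂ (max Tu 0) with hT₃def
    have hT₃T₂ : T₂ ≤ T₃ := le_max_left _ _
    have hT₃u : Tu ≤ T₃ := (le_max_left _ _).trans (le_max_right _ _)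
    have hT₃0 : (0:ℝ) ≤ T₃ := (le_max_right _ _).trans (le_max_right _ _)
    obtain ⟨T, hTa, hT⟩ := LV_eventually_above (x := v)
      (d := fun t => v t * (a₂ - b₂ * u t - c₂ * v t)) (a := T₃)
      (K := a₂ / c₂ - ε) (M := Mv) (δ := K₂ * (c₂ * ε / 2)) (by positivity)
      (fun t ht => hv t (hT₃0.trans ht))
      (fun t ht => hMv t (hT₃0.trans ht))
      (fun t ht hKt => by
        have ht0 : (0:ℝ) ≤ t := hT₃0.trans ht
        have h1 : 0 < u t := hupos t ht0
        have h2 : K₂ ≤ v t := hK₂v t (hT₃T₂.trans ht)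
        have h3 : u t < c₂ * ε / (2 * b₂) := hTu t (hT₃u.trans ht)
        have h4 : c₂ * (a₂ / c₂) = a₂ := by field_simp
        have h5 : b₂ * (c₂ * ε / (2 * b₂)) = c₂ * ε / 2 := by field_simp
        have h6 : c₂ * ε / 2 ≤ a₂ - b₂ * u t - c₂ * v t := by nlinarith
        calc K₂ * (c₂ * ε / 2) ≤ v t * (c₂ * ε / 2) :=
              mul_le_mul_of_nonneg_right h2 (by positivity)
          _ ≤ v t * (a₂ - b₂ * u t - c₂ * v t) := by nlinarith)
    exact ⟨T, hT⟩
  -- combine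
  rw [Metric.tendsto_atTop]
  intro ε hε
  obtain ⟨Ta, hTa⟩ := hvupper (ε / 2) (by positivity)
  obtain ⟨Tb, hTb⟩ := hvlower (ε / 2) (by positivity)
  refine ⟨max Ta Tb, fun t ht => ?_⟩
  have h1 := hTa t ((le_max_left _ _).trans ht)
  have h2 := hTb t ((le_max_right _ _).trans ht)
  rw [Real.dist_eq, abs_lt]
  constructor <;> linarith
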